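/- Symmetry: Let b ∈ (0,1), and suppose g ∈ V⁰₊(ℝ) is even, i.e., g(x) = g(−x) for all x ∈ ℝ. Let z : [0,1] → ℂ be measurable. Then h_z is even (h_z(x) = h_z(−x) for a.e. x ∈ ℝ) if and only if z is antisymmetric around x = 1/2, i.e., z(x) = −z(1−x) for a.e. x ∈ [0,1/2]. -/

import Mathlib

open MeasureTheory Filter Topology Set

noncomputable section

attribute [local instance] Classical.propDecidable

/-- `kmax b` is the largest nonnegative integer strictly smaller than `b/(1-b)`. -/
def kmax (b : ℝ) : ℕ := ⌈b / (1 - b)⌉₊ - 1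

/-- The window class `V⁺ⁿ(ℝ)`: `Cⁿ` functions with support exactly `[-1,1]`,
nonvanishing on `(-1,1)`. -/
def Vplus (n : ℕ) (g : ℝ → ℂ) : Prop :=
  ContDiff ℝ n g ∧ tsupport g = Set.Icc (-1 : ℝ) 1 ∧ ∀ x ∈ Set.Ioo (-1 : ℝ) 1, g x ≠ 0

/-- The `1`-periodic function `ψ(x) = 1 / ∑ₙ g(x+n)`. -/
def psiFun (g : ℝ → ℂ) (x : ℝ) : ℂ := 1 / ∑' n : ℤ, g (x + n)

/-- The auxiliary function `γ_k` (translated so that it is defined near `[k/b, k+1]`). -/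
def gammaAux (b : ℝ) (g z : ℝ → ℂ) (k : ℕ) (x : ℝ) : ℂ :=
  (-1 : ℂ) ^ k *
    (∏ j ∈ Finset.Icc 1 k,
      g (x - k - 1 - j * (1 / b - 1)) / g (x - k - j * (1 / b - 1))) *
    (g (x - k - 1) * z (x - k) + (b : ℂ) * psiFun g (x - k))

/-- The auxiliary function `η_k` (translated so that it is defined near `[-k-1, -k/b]`). -/
def etaAux (b : ℝ) (g z : ℝ → ℂ) (k : ℕ) (x : ℝ) : ℂ :=
  (-1 : ℂ) ^ k *
    (∏ j ∈ Finset.Icc 1 k,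
      g (x + k + 1 + j * (1 / b - 1)) / g (x + k + j * (1 / b - 1))) *
    (-(g (x + k + 1) * z (x + k + 1)) + (b : ℂ) * psiFun g (x + k + 1))

/-- The dual window candidate `h_z`, defined piecewise (the pieces are pairwise disjoint). -/
def hz (b : ℝ) (g z : ℝ → ℂ) (x : ℝ) : ℂ :=
  (starRingEnd ℂ)
    (if x ∈ Set.Ico (-1 : ℝ) 0 then etaAux b g z 0 x
     else if x ∈ Set.Icc (0 : ℝ) 1 then gammaAux b g z 0 x
     else if hk : ∃ k : ℕ, 1 ≤ k ∧ k ≤ kmax b ∧ x ∈ Set.Icc ((k : ℝ) / b) ((k : ℝ) + 1) then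
       gammaAux b g z hk.choose x
     else if hk : ∃ k : ℕ, 1 ≤ k ∧ k ≤ kmax b ∧ x ∈ Set.Icc (-(k : ℝ) - 1) (-(k : ℝ) / b) then
       etaAux b g z hk.choose x
     else 0)

/-- The time–frequency shift `M_{bm} T_k w`. -/
def timeFreqShift (b : ℝ) (m k : ℤ) (w : ℝ → ℂ) : ℝ → ℂ :=
  fun x => Complex.exp (2 * Real.pi * Complex.I * (b : ℂ) * (m : ℂ) * (x : ℂ)) * w (x - k)

/-- The Gabor coefficient `⟨f, M_{bm} T_k w⟩` in `L²(ℝ)`. -/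
def gaborCoef (b : ℝ) (w f : ℝ → ℂ) (m k : ℤ) : ℂ :=
  ∫ x : ℝ, f x * (starRingEnd ℂ) (timeFreqShift b m k w x)

/-- The Gabor system `G(w,1,b)` is a Bessel system. -/
def GaborBessel (b : ℝ) (w : ℝ → ℂ) : Prop :=
  MemLp w 2 (volume : Measure ℝ) ∧
  ∃ B > (0 : ℝ), ∀ f : ℝ → ℂ, MemLp f 2 (volume : Measure ℝ) →
    ∑' mk : ℤ × ℤ, ‖gaborCoef b w f mk.1 mk.2‖ ^ 2 ≤ B * ∫ x : ℝ, ‖f x‖ ^ 2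

/-- `G(g,1,b)` and `G(h,1,b)` are dual frames: both Bessel, and every `f ∈ L²(ℝ)` has the
reconstruction `f = ∑_{m,k} ⟨f, M_{bm}T_k g⟩ M_{bm}T_k h` with unconditional `L²`-convergence. -/
def GaborDualFrames (b : ℝ) (g h : ℝ → ℂ) : Prop :=
  GaborBessel b g ∧ GaborBessel b h ∧
  ∀ f : Lp ℂ 2 (volume : Measure ℝ),
    ∃ F : ℤ × ℤ → Lp ℂ 2 (volume : Measure ℝ),
      (∀ mk : ℤ × ℤ, (F mk : ℝ → ℂ) =ᵐ[volume]
        fun x => gaborCoef b g (f : ℝ → ℂ) mk.1 mk.2 * timeFreqShift b mk.1 mk.2 h x) ∧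
      HasSum F f

/-- `F` has a simple discontinuity at `x₀`: both one-sided limits exist but differ. -/
def SimpleDiscontAt (F : ℝ → ℂ) (x₀ : ℝ) : Prop :=
  ∃ l r : ℂ, Tendsto F (𝓝[<] x₀) (𝓝 l) ∧ Tendsto F (𝓝[>] x₀) (𝓝 r) ∧ l ≠ r

/-- `f` is piecewise `C^{n+1}` with seam points contained in the finite set `s`:
`f` is `C^{n+1}` off `s`, and at each point of `s` the one-sided limits of the
`(n+1)`-st derivative exist. -/
def PiecewiseCn1 (n : ℕ) (f : ℝ → ℂ) (s : Finset ℝ) : Prop :=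
  (∀ y : ℝ, y ∉ s → ContDiffAt ℝ (n + 1) f y) ∧
  ∀ y ∈ s, (∃ l, Tendsto (iteratedDeriv (n + 1) f) (𝓝[<] y) (𝓝 l)) ∧
           (∃ r, Tendsto (iteratedDeriv (n + 1) f) (𝓝[>] y) (𝓝 r))

section Lemmas

variable {b : ℝ} {g z : ℝ → ℂ}

lemma psi_add_int (g : ℝ → ℂ) (x : ℝ) (n : ℤ) : psiFun g (x + (n : ℝ)) = psiFun g x := by
  unfold psiFun
  congr 1
  calc ∑' m : ℤ, g (x + (n : ℝ) + (m : ℝ)) = ∑' m : ℤ, g (x + ((n + m : ℤ) : ℝ)) := by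
        refine tsum_congr fun m => ?_
        congr 1
        push_cast
        ring
    _ = ∑' m : ℤ, g (x + (m : ℝ)) := (Equiv.addLeft n).tsum_eq (fun m : ℤ => g (x + (m : ℝ)))

lemma psi_neg (hgeven : ∀ x : ℝ, g x = g (-x)) (x : ℝ) : psiFun g (-x) = psiFun g x := by
  unfold psiFun
  congr 1
  calc ∑' m : ℤ, g (-x + (m : ℝ)) = ∑' m : ℤ, g (x + ((-m : ℤ) : ℝ)) := by
        refine tsum_congr fun m => ?_
        rw [hgeven (-x + (m : ℝ))]
        congr 1
        push_cast
        ring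
    _ = ∑' m : ℤ, g (x + (m : ℝ)) := (Equiv.neg ℤ).tsum_eq (fun m : ℤ => g (x + (m : ℝ)))

lemma gamma_eq_eta (hgeven : ∀ x : ℝ, g x = g (-x)) (k : ℕ) (x : ℝ)
    (hzx : z (x - (k : ℝ)) = -z (-x + (k : ℝ) + 1)) :
    gammaAux b g z k x = etaAux b g z k (-x) := by
  simp only [gammaAux, etaAux]
  have hψ : psiFun g (-x + (k : ℝ) + 1) = psiFun g (x - (k : ℝ)) := by
    rw [show -x + (k : ℝ) + 1 = -(x - (k : ℝ)) + ((1 : ℤ) : ℝ) by push_cast; ring,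
      psi_add_int, psi_neg hgeven]
  have hprod : (∏ j ∈ Finset.Icc 1 k,
        g (-x + (k : ℝ) + 1 + (j : ℝ) * (1 / b - 1)) / g (-x + (k : ℝ) + (j : ℝ) * (1 / b - 1)))
      = ∏ j ∈ Finset.Icc 1 k,
        g (x - (k : ℝ) - 1 - (j : ℝ) * (1 / b - 1)) / g (x - (k : ℝ) - (j : ℝ) * (1 / b - 1)) := by
    refine Finset.prod_congr rfl fun j _ => ?_
    rw [show -x + (k : ℝ) + 1 + (j : ℝ) * (1 / b - 1)
          = -(x - (k : ℝ) - 1 - (j : ℝ) * (1 / b - 1)) by ring,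
        show -x + (k : ℝ) + (j : ℝ) * (1 / b - 1)
          = -(x - (k : ℝ) - (j : ℝ) * (1 / b - 1)) by ring, ← hgeven, ← hgeven]
  have hg1 : g (-x + (k : ℝ) + 1) = g (x - (k : ℝ) - 1) := by
    rw [show -x + (k : ℝ) + 1 = -(x - (k : ℝ) - 1) by ring, ← hgeven]
  rw [hprod, hψ, hg1, hzx]
  ring

lemma neg_mem_pos {b : ℝ} {k : ℕ} {x : ℝ}
    (h : x ∈ Set.Icc (-(k : ℝ) - 1) (-(k : ℝ) / b)) :
    -x ∈ Set.Icc ((k : ℝ) / b) ((k : ℝ) + 1) := by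
  have hnd : -(k : ℝ) / b = -((k : ℝ) / b) := neg_div _ _
  rw [hnd] at h
  exact ⟨by linarith [h.2], by linarith [h.1]⟩

lemma pos_mem_neg {b : ℝ} {k : ℕ} {x : ℝ}
    (h : x ∈ Set.Icc ((k : ℝ) / b) ((k : ℝ) + 1)) :
    -x ∈ Set.Icc (-(k : ℝ) - 1) (-(k : ℝ) / b) := by
  have hnd : -(k : ℝ) / b = -((k : ℝ) / b) := neg_div _ _
  rw [hnd]
  exact ⟨by linarith [h.2], by linarith [h.1]⟩

lemma k_lt_k_div (hb : b ∈ Set.Ioo (0 : ℝ) 1) {k : ℕ} (hk1 : 1 ≤ k) :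
    (k : ℝ) < (k : ℝ) / b := by
  rw [lt_div_iff₀ hb.1]
  have h1k : (1 : ℝ) ≤ (k : ℝ) := by exact_mod_cast hk1
  nlinarith [hb.2]

lemma one_lt_k_div (hb : b ∈ Set.Ioo (0 : ℝ) 1) {k : ℕ} (hk1 : 1 ≤ k) :
    1 < (k : ℝ) / b := by
  rw [lt_div_iff₀ hb.1, one_mul]
  have h1k : (1 : ℝ) ≤ (k : ℝ) := by exact_mod_cast hk1
  linarith [hb.2]

lemma pos_unique (hb : b ∈ Set.Ioo (0 : ℝ) 1) {k k' : ℕ} (hk1 : 1 ≤ k) (hk1' : 1 ≤ k')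
    {x : ℝ} (hx : x ∈ Set.Icc ((k : ℝ) / b) ((k : ℝ) + 1))
    (hx' : x ∈ Set.Icc ((k' : ℝ) / b) ((k' : ℝ) + 1)) : k = k' := by
  have key : ∀ m m' : ℕ, 1 ≤ m → m' < m → (m : ℝ) / b ≤ x → x ≤ (m' : ℝ) + 1 → False := by
    intro m m' hm hlt h1 h2
    have hc : (m' : ℝ) + 1 ≤ (m : ℝ) := by exact_mod_cast hlt
    have h3 := k_lt_k_div hb hm
    linarith
  rcases lt_trichotomy k k' with h | h | h
  · exact (key k' k hk1' h hx'.1 hx.2).elim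
  · exact h
  · exact (key k k' hk1 h hx.1 hx'.2).elim

lemma hz_Icc01 {x : ℝ} (hx : x ∈ Set.Icc (0 : ℝ) 1) :
    hz b g z x = (starRingEnd ℂ) (gammaAux b g z 0 x) := by
  unfold hz
  rw [if_neg, if_pos hx]
  rw [Set.mem_Ico]
  push_neg
  intro
  exact hx.1

lemma hz_Ico {x : ℝ} (hx : x ∈ Set.Ico (-1 : ℝ) 0) :
    hz b g z x = (starRingEnd ℂ) (etaAux b g z 0 x) := by
  unfold hz
  rw [if_pos hx]

lemma hz_pos (hb : b ∈ Set.Ioo (0 : ℝ) 1) {k : ℕ} (hk1 : 1 ≤ k) (hk2 : k ≤ kmax b)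
    {x : ℝ} (hx : x ∈ Set.Icc ((k : ℝ) / b) ((k : ℝ) + 1)) :
    hz b g z x = (starRingEnd ℂ) (gammaAux b g z k x) := by
  have h1x : 1 < x := lt_of_lt_of_le (one_lt_k_div hb hk1) hx.1
  have hex : ∃ k : ℕ, 1 ≤ k ∧ k ≤ kmax b ∧ x ∈ Set.Icc ((k : ℝ) / b) ((k : ℝ) + 1) :=
    ⟨k, hk1, hk2, hx⟩
  unfold hz
  rw [if_neg (by rw [Set.mem_Ico]; push_neg; intro; linarith),
      if_neg (by rw [Set.mem_Icc]; push_neg; intro; linarith),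
      dif_pos hex]
  obtain ⟨h1, _, h3⟩ := hex.choose_spec
  rw [pos_unique hb h1 hk1 h3 hx]

lemma hz_neg (hb : b ∈ Set.Ioo (0 : ℝ) 1) {k : ℕ} (hk1 : 1 ≤ k) (hk2 : k ≤ kmax b)
    {x : ℝ} (hx : x ∈ Set.Icc (-(k : ℝ) - 1) (-(k : ℝ) / b)) :
    hz b g z x = (starRingEnd ℂ) (etaAux b g z k x) := by
  have hnd : -(k : ℝ) / b = -((k : ℝ) / b) := neg_div _ _
  have h1x : x < -1 := by
    have := one_lt_k_div hb hk1
    have := hx.2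
    rw [hnd] at this
    linarith
  have hex : ∃ k : ℕ, 1 ≤ k ∧ k ≤ kmax b ∧ x ∈ Set.Icc (-(k : ℝ) - 1) (-(k : ℝ) / b) :=
    ⟨k, hk1, hk2, hx⟩
  unfold hz
  rw [if_neg (by rw [Set.mem_Ico]; push_neg; intro; linarith),
      if_neg (by rw [Set.mem_Icc]; push_neg; intro; linarith),
      dif_neg, dif_pos hex]
  · obtain ⟨h1, _, h3⟩ := hex.choose_spec
    rw [pos_unique hb h1 hk1 (neg_mem_pos h3) (neg_mem_pos hx)]
  · rintro ⟨k', hk1', _, hx'⟩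
    have h0 : (1 : ℝ) ≤ (k' : ℝ) := by exact_mod_cast hk1'
    have : (0 : ℝ) < (k' : ℝ) / b := div_pos (by linarith) hb.1
    linarith [hx'.1]

lemma hz_zero_eval {x : ℝ} (h1 : x ∉ Set.Ico (-1 : ℝ) 0) (h2 : x ∉ Set.Icc (0 : ℝ) 1)
    (h3 : ¬∃ k : ℕ, 1 ≤ k ∧ k ≤ kmax b ∧ x ∈ Set.Icc ((k : ℝ) / b) ((k : ℝ) + 1))
    (h4 : ¬∃ k : ℕ, 1 ≤ k ∧ k ≤ kmax b ∧ x ∈ Set.Icc (-(k : ℝ) - 1) (-(k : ℝ) / b)) :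
    hz b g z x = 0 := by
  unfold hz
  rw [if_neg h1, if_neg h2, dif_neg h3, dif_neg h4, map_zero]

lemma main_pos (hb : b ∈ Set.Ioo (0 : ℝ) 1) (hgeven : ∀ x : ℝ, g x = g (-x)) {x : ℝ}
    (hxpos : 0 < x)
    (H1 : ∀ k : ℕ, x - (k : ℝ) ∈ Set.Ioo (0 : ℝ) 1 → z (x - (k : ℝ)) = -z (1 - (x - (k : ℝ))))
    (H3 : ∀ n : ℤ, x ≠ (n : ℝ)) :
    hz b g z x = hz b g z (-x) := by
  have key : ∀ k : ℕ, x - (k : ℝ) ∈ Set.Ioo (0 : ℝ) 1 →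
      z (x - (k : ℝ)) = -z (-x + (k : ℝ) + 1) := by
    intro k hk
    have h := H1 k hk
    rw [show (1 : ℝ) - (x - (k : ℝ)) = -x + (k : ℝ) + 1 by ring] at h
    exact h
  rcases lt_trichotomy x 1 with h1 | h1 | h1
  · rw [hz_Icc01 ⟨hxpos.le, h1.le⟩, hz_Ico ⟨by linarith, by linarith⟩]
    exact congrArg _ (gamma_eq_eta hgeven 0 x (key 0 (by simpa using Set.mem_Ioo.mpr ⟨hxpos, h1⟩)))
  · exact absurd (by push_cast; linarith : x = ((1 : ℤ) : ℝ)) (H3 1)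
  · by_cases hex : ∃ k : ℕ, 1 ≤ k ∧ k ≤ kmax b ∧ x ∈ Set.Icc ((k : ℝ) / b) ((k : ℝ) + 1)
    · obtain ⟨k, hk1, hk2, hx⟩ := hex
      have hkk := k_lt_k_div hb hk1
      have hxk1 : x < (k : ℝ) + 1 := by
        rcases lt_or_eq_of_le hx.2 with h | h
        · exact h
        · exact absurd (by push_cast; linarith : x = (((k : ℤ) + 1 : ℤ) : ℝ)) (H3 ((k : ℤ) + 1))
      rw [hz_pos hb hk1 hk2 hx, hz_neg hb hk1 hk2 (pos_mem_neg hx)]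
      exact congrArg _
        (gamma_eq_eta hgeven k x (key k ⟨by linarith [hx.1], by linarith⟩))
    · have e1 : hz b g z x = 0 := by
        refine hz_zero_eval ?_ ?_ hex ?_
        · rw [Set.mem_Ico]; push_neg; intro; linarith
        · rw [Set.mem_Icc]; push_neg; intro; linarith
        · rintro ⟨k, hk1, _, hx'⟩
          have hnd : -(k : ℝ) / b = -((k : ℝ) / b) := neg_div _ _
          have h0 : (1 : ℝ) ≤ (k : ℝ) := by exact_mod_cast hk1
          have : (0 : ℝ) < (k : ℝ) / b := div_pos (by linarith) hb.1
          rw [hnd] at hx'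
          linarith [hx'.2]
      have e2 : hz b g z (-x) = 0 := by
        refine hz_zero_eval ?_ ?_ ?_ ?_
        · rw [Set.mem_Ico]; push_neg; intro; linarith
        · rw [Set.mem_Icc]; push_neg; intro; linarith
        · rintro ⟨k, hk1, _, hx'⟩
          have h0 : (1 : ℝ) ≤ (k : ℝ) := by exact_mod_cast hk1
          have : (0 : ℝ) < (k : ℝ) / b := div_pos (by linarith) hb.1
          linarith [hx'.1]
        · rintro ⟨k, hk1, hk2, hx'⟩
          have := neg_mem_pos hx'
          rw [neg_neg] at this
          exact hex ⟨k, hk1, hk2, this⟩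
      rw [e1, e2]

lemma main_pt (hb : b ∈ Set.Ioo (0 : ℝ) 1) (hgeven : ∀ x : ℝ, g x = g (-x)) {x : ℝ}
    (H1 : ∀ k : ℕ, x - (k : ℝ) ∈ Set.Ioo (0 : ℝ) 1 → z (x - (k : ℝ)) = -z (1 - (x - (k : ℝ))))
    (H2 : ∀ k : ℕ, -x - (k : ℝ) ∈ Set.Ioo (0 : ℝ) 1 → z (-x - (k : ℝ)) = -z (1 - (-x - (k : ℝ))))
    (H3 : ∀ n : ℤ, x ≠ (n : ℝ)) :
    hz b g z x = hz b g z (-x) := by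
  rcases lt_trichotomy 0 x with h | h | h
  · exact main_pos hb hgeven h H1 H3
  · exact absurd (by push_cast; linarith : x = ((0 : ℤ) : ℝ)) (H3 0)
  · have H3' : ∀ n : ℤ, -x ≠ (n : ℝ) := by
      intro n hn
      exact H3 (-n) (by push_cast; linarith)
    have := main_pos hb hgeven (by linarith : (0:ℝ) < -x) H2 H3'
    rw [neg_neg] at this
    exact this.symm

lemma forward_pt (hb : b ∈ Set.Ioo (0 : ℝ) 1) (hg : Vplus 0 g)
    (hgeven : ∀ x : ℝ, g x = g (-x)) {x : ℝ} (hx : x ∈ Set.Ioo (0 : ℝ) 1)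
    (h : hz b g z x = hz b g z (-x)) : z x = -z (1 - x) := by
  rw [hz_Icc01 ⟨hx.1.le, hx.2.le⟩, hz_Ico ⟨by linarith [hx.2], by linarith [hx.1]⟩] at h
  have h2 : gammaAux b g z 0 x = etaAux b g z 0 (-x) := (starRingEnd ℂ).injective h
  have he : (Finset.Icc 1 0 : Finset ℕ) = ∅ := Finset.Icc_eq_empty (by norm_num)
  simp only [gammaAux, etaAux, he, Finset.prod_empty, pow_zero, one_mul, mul_one,
    Nat.cast_zero, sub_zero, add_zero, neg_add_rev] at h2
  have hψ : psiFun g (-x + 1) = psiFun g x := by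
    rw [show -x + (1 : ℝ) = -x + ((1 : ℤ) : ℝ) by norm_num, psi_add_int, psi_neg hgeven]
  have hgg : g (-x + 1) = g (x - 1) := by
    rw [show -x + (1 : ℝ) = -(x - 1) by ring, ← hgeven]
  have hzz : z (-x + 1) = z (1 - x) := by rw [show -x + (1 : ℝ) = 1 - x by ring]
  rw [hψ, hgg, hzz] at h2
  have hgne : g (x - 1) ≠ 0 := hg.2.2 _ ⟨by linarith [hx.1], by linarith [hx.2]⟩
  have h3 : g (x - 1) * (z x + z (1 - x)) = 0 := by linear_combination h2
  rcases mul_eq_zero.mp h3 with h | h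
  · exact absurd h hgne
  · exact eq_neg_of_add_eq_zero_left h

end Lemmas

/-- **Symmetry.** For even `g`, `h_z` is even a.e. iff `z` is antisymmetric
around `1/2` a.e. on `[0,1/2]`. -/
theorem statement4 (b : ℝ) (hb : b ∈ Set.Ioo (0 : ℝ) 1) (g : ℝ → ℂ) (hg : Vplus 0 g)
    (hgeven : ∀ x : ℝ, g x = g (-x)) (z : ℝ → ℂ) (hzmeas : Measurable z) :
    (∀ᵐ x : ℝ, hz b g z x = hz b g z (-x)) ↔
      (∀ᵐ x ∂((volume : Measure ℝ).restrict (Set.Icc (0 : ℝ) (1 / 2))),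
        z x = -z (1 - x)) := by
  constructor
  · intro hae
    rw [ae_restrict_iff' measurableSet_Icc]
    have h0 : ∀ᵐ x : ℝ, x ≠ (0 : ℝ) := by
      rw [ae_iff]
      have : {x : ℝ | ¬x ≠ (0 : ℝ)} = {(0 : ℝ)} := by ext t; simp
      rw [this]
      exact measure_singleton _
    filter_upwards [hae, h0] with x hx hx0 hmem
    exact forward_pt hb hg hgeven
      ⟨lt_of_le_of_ne hmem.1 (Ne.symm hx0), by linarith [hmem.2]⟩ hx
  · intro haz
    set Bad : Set ℝ := Set.Ioo (0 : ℝ) 1 ∩ {t : ℝ | z t = -z (1 - t)}ᶜ with hBadDef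
    have hmemBad : ∀ t : ℝ, t ∈ Bad ↔ t ∈ Set.Ioo (0 : ℝ) 1 ∧ ¬z t = -z (1 - t) := by
      intro t
      rw [hBadDef]
      simp [Set.mem_inter_iff]
    have hBadMeas : MeasurableSet Bad := by
      refine measurableSet_Ioo.inter (MeasurableSet.compl ?_)
      exact measurableSet_eq_fun hzmeas ((hzmeas.comp (measurable_const.sub measurable_id)).neg)
    have hN1 : ∀ᵐ x : ℝ, x ∈ Set.Icc (0 : ℝ) (1 / 2) → z x = -z (1 - x) :=
      (ae_restrict_iff' measurableSet_Icc).mp haz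
    have hN : (volume : Measure ℝ) {x : ℝ | ¬(x ∈ Set.Icc (0 : ℝ) (1 / 2) → z x = -z (1 - x))}
        = 0 := ae_iff.mp hN1
    have hBadNull : (volume : Measure ℝ) Bad = 0 := by
      set N := {x : ℝ | ¬(x ∈ Set.Icc (0 : ℝ) (1 / 2) → z x = -z (1 - x))} with hNdef
      have hpre : (volume : Measure ℝ) ((fun t : ℝ => 1 - t) ⁻¹' N) = 0 := by
        have hNmeas : MeasurableSet N := by
          have : N = Set.Icc (0 : ℝ) (1 / 2) ∩ {t : ℝ | z t = -z (1 - t)}ᶜ := by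
            ext t
            simp only [hNdef, Set.mem_setOf_eq, Set.mem_inter_iff, Set.mem_compl_iff,
              Classical.not_imp]
          rw [this]
          exact measurableSet_Icc.inter (MeasurableSet.compl
            (measurableSet_eq_fun hzmeas
              ((hzmeas.comp (measurable_const.sub measurable_id)).neg)))
        rw [(Measure.measurePreserving_sub_left (volume : Measure ℝ) (1 : ℝ)).measure_preimage
          hNmeas.nullMeasurableSet]
        exact hN
      have hsub : Bad ⊆ N ∪ ((fun t : ℝ => 1 - t) ⁻¹' N) := by
        intro t ht
        obtain ⟨ht01, htne⟩ := (hmemBad t).mp ht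
        by_cases hhalf : t ≤ 1 / 2
        · left
          intro hcon
          exact htne (hcon ⟨ht01.1.le, hhalf⟩)
        · right
          push_neg at hhalf
          show (1 : ℝ) - t ∈ N
          intro hcon
          have hc := hcon ⟨by linarith [ht01.2], by linarith⟩
          rw [show (1 : ℝ) - (1 - t) = t by ring] at hc
          exact htne (by rw [hc, neg_neg])
      exact measure_mono_null hsub (measure_union_null hN hpre)
    have H1 : ∀ᵐ x : ℝ, ∀ k : ℕ, x - (k : ℝ) ∉ Bad := by
      rw [ae_all_iff]
      intro k
      rw [ae_iff]
      have hset : {x : ℝ | ¬x - (k : ℝ) ∉ Bad} = (fun x : ℝ => x - (k : ℝ)) ⁻¹' Bad := by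
        ext t
        simp [Set.mem_preimage]
      rw [hset, (measurePreserving_sub_right (volume : Measure ℝ) ((k : ℝ))).measure_preimage
        hBadMeas.nullMeasurableSet]
      exact hBadNull
    have H2 : ∀ᵐ x : ℝ, ∀ k : ℕ, -x - (k : ℝ) ∉ Bad := by
      rw [ae_all_iff]
      intro k
      rw [ae_iff]
      have hset : {x : ℝ | ¬(-x - (k : ℝ) ∉ Bad)} = (fun x : ℝ => -(k : ℝ) - x) ⁻¹' Bad := by
        ext t
        simp only [Set.mem_setOf_eq, Set.mem_preimage, not_not]
        rw [show -(k : ℝ) - t = -t - (k : ℝ) by ring]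
      rw [hset, (Measure.measurePreserving_sub_left (volume : Measure ℝ) (-(k : ℝ))).measure_preimage
        hBadMeas.nullMeasurableSet]
      exact hBadNull
    have H3 : ∀ᵐ x : ℝ, ∀ n : ℤ, x ≠ (n : ℝ) := by
      rw [ae_all_iff]
      intro n
      rw [ae_iff]
      have : {x : ℝ | ¬x ≠ (n : ℝ)} = {(n : ℝ)} := by ext t; simp
      rw [this]
      exact measure_singleton _
    filter_upwards [H1, H2, H3] with x h1 h2 h3
    refine main_pt hb hgeven ?_ ?_ h3
    · intro k hk
      by_contra hne
      exact h1 k ((hmemBad _).mpr ⟨hk, hne⟩)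
    · intro k hk
      by_contra hne
      exact h2 k ((hmemBad _).mpr ⟨hk, hne⟩)

end
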